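/- Let 𝔐 = (V, ⟨·,·⟩, R) be a model. The following are equivalent: (1) 𝔐 is Jacobi–Videv, i.e. J(x)∘ρ = ρ∘J(x) for all x ∈ V; (2) J(π)∘J(π^⊥) = J(π^⊥)∘J(π) for every nondegenerate subspace π ⊆ V (where π^⊥ denotes the ⟨·,·⟩-orthogonal complement, which is then also nondegenerate); (3) J(π)∘ρ = ρ∘J(π) for every nondegenerate subspace π ⊆ V. -/

import Mathlib

section stmt14aux

variable {V : Type*} [AddCommGroup V] [Module ℝ V] {n : ℕ}
variable (B : V →ₗ[ℝ] V →ₗ[ℝ] ℝ)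

/-- extensionality from nondegeneracy -/
lemma st14_Bext (hBnd : ∀ x, (∀ y, B x y = 0) → x = 0)
    {a b : V} (h : ∀ y, B a y = B b y) : a = b := by
  have := hBnd (a - b) (fun y => by rw [map_sub, LinearMap.sub_apply, h, sub_self])
  exact sub_eq_zero.mp this

lemma st14_LMext (hBnd : ∀ x, (∀ y, B x y = 0) → x = 0)
    {A A' : V →ₗ[ℝ] V} (h : ∀ x y, B (A x) y = B (A' x) y) : A = A' :=
  LinearMap.ext fun x => st14_Bext B hBnd (h x)

/-- dual orthonormality -/
lemma st14_dual {ι : Type} [Fintype ι] [DecidableEq ι] (u : ι → V) (η : ι → ℝ)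
    (hη : ∀ i, η i = 1 ∨ η i = -1)
    (ho : ∀ i j, B (u i) (u j) = if i = j then η i else 0)
    (hspan : ∀ x : V, x ∈ Submodule.span ℝ (Set.range u)) :
    ∀ s t : V, (∑ i, η i * (B (u i) s * B (u i) t)) = B s t := by
  intro s t
  set φ : V →ₗ[ℝ] ℝ := (∑ i, (η i * B (u i) t) • (B (u i))) - B.flip t with hφ
  have hgen : ∀ j, φ (u j) = 0 := by
    intro j
    have : (∑ i, (η i * B (u i) t) • (B (u i))) (u j)
        = ∑ i, (η i * B (u i) t) * B (u i) (u j) := by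
      simp [LinearMap.sum_apply]
    simp only [hφ, LinearMap.sub_apply, LinearMap.flip_apply, this]
    rw [Finset.sum_eq_single j]
    · rw [ho j j]; simp only [if_pos rfl]
      rcases hη j with h | h <;> rw [h] <;> simp
    · intro i _ hij; rw [ho i j, if_neg hij, mul_zero]
    · intro h; exact absurd (Finset.mem_univ j) h
  have hker : Submodule.span ℝ (Set.range u) ≤ LinearMap.ker φ := by
    rw [Submodule.span_le]; rintro _ ⟨j, rfl⟩; exact hgen j
  have hs : φ s = 0 := hker (hspan s)
  simp only [hφ, LinearMap.sub_apply, LinearMap.flip_apply, LinearMap.sum_apply,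
    LinearMap.smul_apply, smul_eq_mul] at hs
  have := sub_eq_zero.mp hs
  rw [← this]
  exact Finset.sum_congr rfl fun i _ => by ring

end stmt14aux

section stmt14aux2

variable {V : Type*} [AddCommGroup V] [Module ℝ V] {n : ℕ}
variable (B : V →ₗ[ℝ] V →ₗ[ℝ] ℝ)

lemma st14_Bext' (hBnd : ∀ x, (∀ y, B x y = 0) → x = 0)
    {a b : V} (h : ∀ y, B a y = B b y) : a = b := by
  have := hBnd (a - b) (fun y => by rw [map_sub, LinearMap.sub_apply, h, sub_self])
  exact sub_eq_zero.mp this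

/-- representation of any vector in the orthonormal basis e -/
lemma st14_rep (hBsymm : ∀ x y, B x y = B y x)
    (hBnd : ∀ x, (∀ y, B x y = 0) → x = 0)
    (e : Module.Basis (Fin n) ℝ V) (ε : Fin n → ℝ)
    (hε : ∀ i, ε i = 1 ∨ ε i = -1)
    (horth : ∀ i j, B (e i) (e j) = if i = j then ε i else 0) :
    ∀ s : V, s = ∑ a, (ε a * B s (e a)) • e a := by
  intro s
  have hspan : ∀ x : V, x ∈ Submodule.span ℝ (Set.range e) := by
    intro x; rw [e.span_eq]; trivial
  have hdual := st14_dual B e ε hε horth hspan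
  refine st14_Bext' B hBnd fun y => ?_
  have : B (∑ a, (ε a * B s (e a)) • e a) y = ∑ a, (ε a * B s (e a)) * B (e a) y := by
    rw [map_sum]; simp [LinearMap.sum_apply]
  rw [this, ← hdual s y]
  exact Finset.sum_congr rfl fun a _ => by rw [hBsymm s (e a)]; ring

end stmt14aux2
section stmt14aux3

variable {V : Type*} [AddCommGroup V] [Module ℝ V] {n : ℕ}
variable (B : V →ₗ[ℝ] V →ₗ[ℝ] ℝ) (R : V →ₗ[ℝ] V →ₗ[ℝ] V →ₗ[ℝ] V →ₗ[ℝ] ℝ)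

lemma st14_exp (hBsymm : ∀ x y, B x y = B y x)
    (hBnd : ∀ x, (∀ y, B x y = 0) → x = 0)
    (e : Module.Basis (Fin n) ℝ V) (ε : Fin n → ℝ)
    (hε : ∀ i, ε i = 1 ∨ ε i = -1)
    (horth : ∀ i j, B (e i) (e j) = if i = j then ε i else 0)
    (x y s : V) :
    R x s s y = ∑ a, ∑ b,
      (ε a * B s (e a)) * ((ε b * B s (e b)) * R x (e a) (e b) y) := by
  conv_lhs => rw [st14_rep B hBsymm hBnd e ε hε horth s]
  rw [map_sum]
  simp only [LinearMap.sum_apply, map_smul, LinearMap.smul_apply, map_sum, smul_eq_mul]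
  rw [Finset.sum_comm]
  exact Finset.sum_congr rfl fun a _ => by
    rw [Finset.mul_sum]
    exact Finset.sum_congr rfl fun b _ => by ring

/-- trace independence: sum over any orthonormal spanning family equals sum over e -/
lemma st14_trace {ι : Type} [Fintype ι] [DecidableEq ι]
    (hBsymm : ∀ x y, B x y = B y x)
    (hBnd : ∀ x, (∀ y, B x y = 0) → x = 0)
    (e : Module.Basis (Fin n) ℝ V) (ε : Fin n → ℝ)
    (hε : ∀ i, ε i = 1 ∨ ε i = -1)
    (horth : ∀ i j, B (e i) (e j) = if i = j then ε i else 0)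
    (u : ι → V) (η : ι → ℝ)
    (hη : ∀ i, η i = 1 ∨ η i = -1)
    (ho : ∀ i j, B (u i) (u j) = if i = j then η i else 0)
    (hspan : ∀ x : V, x ∈ Submodule.span ℝ (Set.range u))
    (x y : V) :
    ∑ i, η i * R x (u i) (u i) y = ∑ a, ε a * R x (e a) (e a) y := by
  have hdual := st14_dual B u η hη ho hspan
  calc ∑ i, η i * R x (u i) (u i) y
      = ∑ i, ∑ a, ∑ b, (ε a * ε b * R x (e a) (e b) y) *
          (η i * (B (u i) (e a) * B (u i) (e b))) := by
        refine Finset.sum_congr rfl fun i _ => ?_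
        rw [st14_exp B R hBsymm hBnd e ε hε horth x y (u i), Finset.mul_sum]
        refine Finset.sum_congr rfl fun a _ => ?_
        rw [Finset.mul_sum]
        exact Finset.sum_congr rfl fun b _ => by ring
    _ = ∑ a, ∑ b, ∑ i, (ε a * ε b * R x (e a) (e b) y) *
          (η i * (B (u i) (e a) * B (u i) (e b))) := by
        rw [Finset.sum_comm]
        exact Finset.sum_congr rfl fun a _ => Finset.sum_comm
    _ = ∑ a, ∑ b, (ε a * ε b * R x (e a) (e b) y) * B (e a) (e b) := by
        refine Finset.sum_congr rfl fun a _ => Finset.sum_congr rfl fun b _ => ?_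
        rw [← Finset.mul_sum, hdual (e a) (e b)]
    _ = ∑ a, ε a * R x (e a) (e a) y := by
        refine Finset.sum_congr rfl fun a _ => ?_
        rw [Finset.sum_eq_single a]
        · rw [horth a a, if_pos rfl]
          rcases hε a with h | h <;> rw [h] <;> ring
        · intro b _ hb; rw [horth a b, if_neg (Ne.symm hb), mul_zero]
        · intro h; exact absurd (Finset.mem_univ a) h

/-- the sum of J over any orthonormal spanning family is ρ -/
lemma st14_sumJ {ι : Type} [Fintype ι] [DecidableEq ι]
    (hBsymm : ∀ x y, B x y = B y x)
    (hBnd : ∀ x, (∀ y, B x y = 0) → x = 0)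
    (e : Module.Basis (Fin n) ℝ V) (ε : Fin n → ℝ)
    (hε : ∀ i, ε i = 1 ∨ ε i = -1)
    (horth : ∀ i j, B (e i) (e j) = if i = j then ε i else 0)
    (J : V → V →ₗ[ℝ] V)
    (hJ : ∀ x y z, B (J x y) z = R y x x z)
    (ρ : V →ₗ[ℝ] V)
    (hρ : ∀ x y, B (ρ x) y = ∑ i, ε i * R x (e i) (e i) y)
    (u : ι → V) (η : ι → ℝ)
    (hη : ∀ i, η i = 1 ∨ η i = -1)
    (ho : ∀ i j, B (u i) (u j) = if i = j then η i else 0)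
    (hspan : ∀ x : V, x ∈ Submodule.span ℝ (Set.range u)) :
    (∑ i, η i • J (u i)) = ρ := by
  refine LinearMap.ext fun x => st14_Bext' B hBnd fun y => ?_
  have h1 : B ((∑ i, η i • J (u i)) x) y = ∑ i, η i * B (J (u i) x) y := by
    rw [LinearMap.sum_apply, map_sum]
    simp [LinearMap.sum_apply, LinearMap.smul_apply]
  rw [h1, hρ]
  simp only [hJ]
  exact st14_trace B R hBsymm hBnd e ε hε horth u η hη ho hspan x y

end stmt14aux3
section stmt14aux4

variable {V : Type*} [AddCommGroup V] [Module ℝ V] {n : ℕ}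
variable (B : V →ₗ[ℝ] V →ₗ[ℝ] ℝ) (R : V →ₗ[ℝ] V →ₗ[ℝ] V →ₗ[ℝ] V →ₗ[ℝ] ℝ)

lemma st14_R4 (hR1 : ∀ x y z w, R x y z w = -R y x z w)
    (hR2 : ∀ x y z w, R x y z w = R z w x y) :
    ∀ x y z w, R x y z w = -R x y w z := by
  intro x y z w
  rw [hR2 x y z w, hR1 z w x y, hR2 w z x y]

lemma st14_pair (hR1 : ∀ x y z w, R x y z w = -R y x z w)
    (hR2 : ∀ x y z w, R x y z w = R z w x y) :
    ∀ x a y, R x a a y = R y a a x := by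
  intro x a y
  rw [hR2 x a a y, hR1 a y x a, st14_R4 R hR1 hR2 y a x a, neg_neg]

/-- J scales quadratically -/
lemma st14_Js (hBnd : ∀ x, (∀ y, B x y = 0) → x = 0)
    (J : V → V →ₗ[ℝ] V)
    (hJ : ∀ x y z, B (J x y) z = R y x x z)
    (c : ℝ) (z : V) : J (c • z) = (c * c) • J z := by
  refine LinearMap.ext fun x => st14_Bext' B hBnd fun y => ?_
  have h1 : B (J (c • z) x) y = (c * c) * R x z z y := by
    rw [hJ]
    simp only [map_smul, LinearMap.smul_apply, smul_eq_mul]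
    ring
  have h2 : B ((c * c) • (J z x)) y = (c * c) * R x z z y := by
    rw [map_smul, LinearMap.smul_apply, smul_eq_mul, hJ]
  rw [LinearMap.smul_apply, h1, h2]

/-- polarization: a symmetric bilinear form vanishing on non-null vectors vanishes -/
lemma st14_polar
    (hBsymm : ∀ x y, B x y = B y x)
    (hBnd : ∀ x, (∀ y, B x y = 0) → x = 0)
    (e : Module.Basis (Fin n) ℝ V) (ε : Fin n → ℝ)
    (hε : ∀ i, ε i = 1 ∨ ε i = -1)
    (horth : ∀ i j, B (e i) (e j) = if i = j then ε i else 0)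
    (T : V →ₗ[ℝ] V →ₗ[ℝ] ℝ)
    (hsym : ∀ s t, T s t = T t s)
    (h0 : ∀ z, B z z ≠ 0 → T z z = 0) :
    ∀ x, T x x = 0 := by
  have hdiag : ∀ i, T (e i) (e i) = 0 := by
    intro i
    refine h0 (e i) ?_
    rw [horth i i, if_pos rfl]
    rcases hε i with h | h <;> rw [h] <;> norm_num
  have hoff : ∀ i j, T (e i) (e j) = 0 := by
    intro i j
    by_cases hij : i = j
    · subst hij; exact hdiag i
    · have hji : ¬ j = i := fun h => hij h.symm
      have hz : B (e i + (2:ℝ) • e j) (e i + (2:ℝ) • e j) ≠ 0 := by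
        simp only [map_add, map_smul, LinearMap.add_apply, LinearMap.smul_apply,
          smul_eq_mul, horth, hij, hji, if_true, if_false, ite_true, ite_false,
          if_pos rfl]
        rcases hε i with h | h <;> rcases hε j with h' | h' <;> rw [h, h'] <;> norm_num
      have h4 := h0 _ hz
      simp only [map_add, map_smul, LinearMap.add_apply, LinearMap.smul_apply,
        smul_eq_mul] at h4
      rw [hdiag i, hdiag j, hsym (e j) (e i)] at h4
      linarith
  intro x
  conv_lhs => rw [st14_rep B hBsymm hBnd e ε hε horth x]
  simp only [map_sum, map_smul, LinearMap.sum_apply, LinearMap.smul_apply, smul_eq_mul]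
  simp [hoff]

end stmt14aux4
section stmt14aux5

variable {V : Type*} [AddCommGroup V] [Module ℝ V] {n : ℕ}
variable (B : V →ₗ[ℝ] V →ₗ[ℝ] ℝ) (R : V →ₗ[ℝ] V →ₗ[ℝ] V →ₗ[ℝ] V →ₗ[ℝ] ℝ)

lemma st14_rho_sa
    (hBsymm : ∀ x y, B x y = B y x)
    (hR1 : ∀ x y z w, R x y z w = -R y x z w)
    (hR2 : ∀ x y z w, R x y z w = R z w x y)
    (e : Module.Basis (Fin n) ℝ V) (ε : Fin n → ℝ)
    (ρ : V →ₗ[ℝ] V)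
    (hρ : ∀ x y, B (ρ x) y = ∑ i, ε i * R x (e i) (e i) y) :
    ∀ a b, B (ρ a) b = B a (ρ b) := by
  intro a b
  rw [hρ a b, hBsymm a (ρ b), hρ b a]
  exact Finset.sum_congr rfl fun i _ => by
    rw [st14_pair R hR1 hR2 a (e i) b]

lemma st14_key
    (hBsymm : ∀ x y, B x y = B y x)
    (hBnd : ∀ x, (∀ y, B x y = 0) → x = 0)
    (hR1 : ∀ x y z w, R x y z w = -R y x z w)
    (hR2 : ∀ x y z w, R x y z w = R z w x y)
    (e : Module.Basis (Fin n) ℝ V) (ε : Fin n → ℝ)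
    (hε : ∀ i, ε i = 1 ∨ ε i = -1)
    (horth : ∀ i j, B (e i) (e j) = if i = j then ε i else 0)
    (J : V → V →ₗ[ℝ] V)
    (hJ : ∀ x y z, B (J x y) z = R y x x z)
    (ρ : V →ₗ[ℝ] V)
    (hρ : ∀ x y, B (ρ x) y = ∑ i, ε i * R x (e i) (e i) y)
    (hnn : ∀ z, B z z ≠ 0 → (J z) ∘ₗ ρ = ρ ∘ₗ (J z)) :
    ∀ x, (J x) ∘ₗ ρ = ρ ∘ₗ (J x) := by
  have hρsa := st14_rho_sa B R hBsymm hR1 hR2 e ε ρ hρ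
  intro x
  refine st14_LMext B hBnd fun a b => ?_
  rw [LinearMap.comp_apply, LinearMap.comp_apply, hJ, hρsa (J x a) b, hJ]
  -- goal : R (ρ a) x x b = R a x x (ρ b)
  set T : V →ₗ[ℝ] V →ₗ[ℝ] ℝ := LinearMap.mk₂ ℝ
    (fun s t => R (ρ a) s t b + R (ρ a) t s b - R a s t (ρ b) - R a t s (ρ b))
    (by intro m m' t
        simp only [map_add, LinearMap.add_apply]
        ring)
    (by intro c m t
        simp only [map_smul, LinearMap.smul_apply, smul_eq_mul]
        ring)
    (by intro m t t'
        simp only [map_add, LinearMap.add_apply]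
        ring)
    (by intro c m t
        simp only [map_smul, LinearMap.smul_apply, smul_eq_mul]
        ring) with hT
  have hTapp : ∀ s t, T s t =
      R (ρ a) s t b + R (ρ a) t s b - R a s t (ρ b) - R a t s (ρ b) := by
    intro s t; rw [hT]; rfl
  have hTsym : ∀ s t, T s t = T t s := by
    intro s t; rw [hTapp, hTapp]; ring
  have hT0 : ∀ z, B z z ≠ 0 → T z z = 0 := by
    intro z hz
    have h := hnn z hz
    have h' : B (J z (ρ a)) b = B (ρ (J z a)) b := by
      have h2 := congrArg (fun (A : V →ₗ[ℝ] V) => B (A a) b) h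
      simpa [LinearMap.comp_apply] using h2
    rw [hJ] at h'
    rw [hρsa (J z a) b, hJ] at h'
    rw [hTapp]
    linarith
  have hx := st14_polar B hBsymm hBnd e ε hε horth T hTsym hT0 x
  rw [hTapp] at hx
  linarith

end stmt14aux5
section stmt14aux6

variable {V : Type*} [AddCommGroup V] [Module ℝ V]
variable (B : V →ₗ[ℝ] V →ₗ[ℝ] ℝ)

lemma st14_scale (d : ℝ) (hd : d ≠ 0) :
    (Real.sqrt |d|)⁻¹ * ((Real.sqrt |d|)⁻¹ * d) = if 0 < d then 1 else -1 := by
  set s := Real.sqrt |d| with hs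
  have h1 : s * s = |d| := Real.mul_self_sqrt (abs_nonneg d)
  have h2 : s ≠ 0 := ne_of_gt (Real.sqrt_pos.mpr (abs_pos.mpr hd))
  have h3 : s⁻¹ * (s⁻¹ * d) = d / (s * s) := by
    field_simp
  rw [h3, h1]
  rcases lt_or_gt_of_ne hd with h | h
  · rw [if_neg (not_lt.mpr h.le), abs_of_neg h]
    rw [div_neg, div_self hd]
  · rw [if_pos h, abs_of_pos h, div_self hd]

lemma st14_perp [FiniteDimensional ℝ V]
    (hBsymm : ∀ x y, B x y = B y x)
    (hBnd : ∀ x, (∀ y, B x y = 0) → x = 0)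
    (v0 : V) (εv0 : ℝ) (hεv0 : εv0 = 1 ∨ εv0 = -1)
    (hv00 : B v0 v0 = εv0) :
    ∃ (l : ℕ) (w : Fin l → V) (εw : Fin l → ℝ),
      (∀ i, εw i = 1 ∨ εw i = -1) ∧
      (∀ i j, B (w i) (w j) = if i = j then εw i else 0) ∧
      (∀ i, B (w i) v0 = 0) ∧
      (∀ x : V, B x v0 = 0 → x ∈ Submodule.span ℝ (Set.range w)) := by
  set U : Submodule ℝ V := LinearMap.ker (B.flip v0) with hU
  have hUmem : ∀ x : V, x ∈ U ↔ B x v0 = 0 := by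
    intro x; rw [hU, LinearMap.mem_ker, LinearMap.flip_apply]
  have hdec : ∀ t : V, B (t - (εv0 * B t v0) • v0) v0 = 0 := by
    intro t
    rw [map_sub, LinearMap.sub_apply, map_smul, LinearMap.smul_apply, smul_eq_mul, hv00]
    rcases hεv0 with h | h <;> rw [h] <;> ring
  have hBU : ∀ x : U, (∀ y : U, B (x : V) (y : V) = 0) → (x : V) = 0 := by
    intro x hx
    apply hBnd
    intro t
    have h1 : (t - (εv0 * B t v0) • v0) ∈ U := (hUmem _).mpr (hdec t)
    have h2 : B (x : V) (t - (εv0 * B t v0) • v0) = 0 := hx ⟨_, h1⟩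
    have h3 : B (x : V) v0 = 0 := (hUmem _).mp x.2
    calc B (x : V) t
        = B (x : V) ((t - (εv0 * B t v0) • v0) + (εv0 * B t v0) • v0) := by
          rw [sub_add_cancel]
      _ = 0 := by rw [map_add, h2, map_smul, smul_eq_mul, h3, mul_zero, zero_add]
  have hsymmU : (LinearMap.BilinForm.restrict B U).IsSymm := by
    refine LinearMap.BilinForm.isSymm_def.mpr ?_
    intro x y
    simp only [LinearMap.BilinForm.restrict_apply, RingHom.id_apply]
    exact hBsymm _ _
  obtain ⟨b, hb⟩ := LinearMap.BilinForm.exists_orthogonal_basis (LinearMap.BilinForm.isSymm_iff.mp hsymmU)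
  have hborth : ∀ i j, i ≠ j → B (b i : V) (b j : V) = 0 := by
    intro i j hij
    have := hb hij
    simpa [LinearMap.BilinForm.restrict_apply, LinearMap.BilinForm.IsOrtho] using this
  have hbne : ∀ i, B (b i : V) (b i : V) ≠ 0 := by
    intro i hzero
    have hall : ∀ y : U, B (b i : V) (y : V) = 0 := by
      intro y
      have hy : (∑ j, b.repr y j • b j) = y := b.sum_repr y
      rw [← hy]
      have hcoe : ((∑ j, b.repr y j • b j : U) : V) = ∑ j, b.repr y j • (b j : V) := by
        push_cast
        rfl
      rw [hcoe, map_sum]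
      refine Finset.sum_eq_zero fun j _ => ?_
      rw [map_smul, smul_eq_mul]
      by_cases hji : j = i
      · subst hji; rw [hzero, mul_zero]
      · rw [hborth i j (fun h => hji h.symm), mul_zero]
    have h0 := hBU (b i) hall
    exact b.ne_zero i (by exact_mod_cast h0)
  refine ⟨Module.finrank ℝ U,
    fun i => (Real.sqrt |B (b i : V) (b i : V)|)⁻¹ • (b i : V),
    fun i => if 0 < B (b i : V) (b i : V) then 1 else -1,
    fun i => by by_cases h : 0 < B (b i : V) (b i : V) <;> simp [h],
    ?_, ?_, ?_⟩
  · intro i j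
    dsimp only
    by_cases hij : i = j
    · subst hij
      rw [if_pos rfl]
      simp only [map_smul, LinearMap.smul_apply, smul_eq_mul]
      exact st14_scale _ (hbne i)
    · rw [if_neg hij]
      simp only [map_smul, LinearMap.smul_apply, smul_eq_mul]
      rw [hborth i j hij, mul_zero, mul_zero]
  · intro i
    dsimp only
    rw [map_smul, LinearMap.smul_apply, smul_eq_mul, (hUmem _).mp (b i).2, mul_zero]
  · intro x hx
    have hsb : Submodule.span ℝ (Set.range (fun i => (b i : V))) = U := by
      have hr : Set.range (fun i => (b i : V)) = (U.subtype) '' (Set.range b) := by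
        rw [← Set.range_comp]; rfl
      rw [hr, Submodule.span_image, b.span_eq, Submodule.map_subtype_top]
    have hbw : ∀ i, (b i : V) ∈ Submodule.span ℝ
        (Set.range (fun i => (Real.sqrt |B (b i : V) (b i : V)|)⁻¹ • (b i : V))) := by
      intro i
      have hs : Real.sqrt |B (b i : V) (b i : V)| ≠ 0 :=
        ne_of_gt (Real.sqrt_pos.mpr (abs_pos.mpr (hbne i)))
      have hr : (b i : V) = (Real.sqrt |B (b i : V) (b i : V)|) •
          ((Real.sqrt |B (b i : V) (b i : V)|)⁻¹ • (b i : V)) := by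
        rw [smul_smul, mul_inv_cancel₀ hs, one_smul]
      rw [hr]
      exact Submodule.smul_mem _ _ (Submodule.subset_span ⟨i, rfl⟩)
    have hle : Submodule.span ℝ (Set.range (fun i => (b i : V))) ≤ Submodule.span ℝ
        (Set.range (fun i => (Real.sqrt |B (b i : V) (b i : V)|)⁻¹ • (b i : V))) := by
      rw [Submodule.span_le]
      rintro _ ⟨i, rfl⟩
      exact hbw i
    have hxU : x ∈ U := (hUmem x).mpr hx
    rw [← hsb] at hxU
    exact hle hxU

end stmt14aux6


/-- A model is Jacobi–Videv iff the higher order Jacobi operators J(π) and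
J(π^⊥) commute for every nondegenerate subspace π, iff J(π) commutes with the Ricci
operator ρ for every nondegenerate subspace π.  Here a nondegenerate subspace is
presented via a ⟨·,·⟩-orthonormal basis, and J(π) := Σᵢ εᵢ J(vᵢ). -/
theorem stmt14 {V : Type*} [AddCommGroup V] [Module ℝ V] [FiniteDimensional ℝ V]
    {n : ℕ}
    (B : V →ₗ[ℝ] V →ₗ[ℝ] ℝ)
    (hBsymm : ∀ x y, B x y = B y x)
    (hBnd : ∀ x, (∀ y, B x y = 0) → x = 0)
    (R : V →ₗ[ℝ] V →ₗ[ℝ] V →ₗ[ℝ] V →ₗ[ℝ] ℝ)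
    (hR1 : ∀ x y z w, R x y z w = -R y x z w)
    (hR2 : ∀ x y z w, R x y z w = R z w x y)
    (hR3 : ∀ x y z w, R x y z w + R y z x w + R z x y w = 0)
    (e : Module.Basis (Fin n) ℝ V)
    (ε : Fin n → ℝ)
    (hε : ∀ i, ε i = 1 ∨ ε i = -1)
    (horth : ∀ i j, B (e i) (e j) = if i = j then ε i else 0)
    (J : V → V →ₗ[ℝ] V)
    (hJ : ∀ x y z, B (J x y) z = R y x x z)
    (ρ : V →ₗ[ℝ] V)
    (hρ : ∀ x y, B (ρ x) y = ∑ i, ε i * R x (e i) (e i) y) :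
    ((∀ x, (J x) ∘ₗ ρ = ρ ∘ₗ (J x)) ↔
      (∀ (π : Submodule ℝ V) (k l : ℕ) (v : Fin k → V) (εv : Fin k → ℝ)
          (w : Fin l → V) (εw : Fin l → ℝ),
        (∀ i, v i ∈ π) → (∀ i, εv i = 1 ∨ εv i = -1) →
        (∀ i j, B (v i) (v j) = if i = j then εv i else 0) →
        Submodule.span ℝ (Set.range v) = π →
        (∀ i, ∀ y ∈ π, B (w i) y = 0) → (∀ i, εw i = 1 ∨ εw i = -1) →
        (∀ i j, B (w i) (w j) = if i = j then εw i else 0) →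
        (∀ x : V, (∀ y ∈ π, B x y = 0) → x ∈ Submodule.span ℝ (Set.range w)) →
        (∑ i, εv i • J (v i)) ∘ₗ (∑ i, εw i • J (w i)) =
          (∑ i, εw i • J (w i)) ∘ₗ (∑ i, εv i • J (v i))))
    ∧
    ((∀ x, (J x) ∘ₗ ρ = ρ ∘ₗ (J x)) ↔
      (∀ (π : Submodule ℝ V) (k : ℕ) (v : Fin k → V) (εv : Fin k → ℝ),
        (∀ i, v i ∈ π) → (∀ i, εv i = 1 ∨ εv i = -1) →
        (∀ i j, B (v i) (v j) = if i = j then εv i else 0) →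
        Submodule.span ℝ (Set.range v) = π →
        (∑ i, εv i • J (v i)) ∘ₗ ρ = ρ ∘ₗ (∑ i, εv i • J (v i)))) := by
  have hkey := st14_key B R hBsymm hBnd hR1 hR2 e ε hε horth J hJ ρ hρ
  -- (1) implies that every J(π) commutes with ρ
  have hsumcomm : ∀ (_ : ∀ x, (J x) ∘ₗ ρ = ρ ∘ₗ (J x)) (k : ℕ) (v : Fin k → V)
      (εv : Fin k → ℝ),
      (∑ i, εv i • J (v i)) ∘ₗ ρ = ρ ∘ₗ (∑ i, εv i • J (v i)) := by
    intro h1 k v εv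
    rw [← Module.End.mul_eq_comp, ← Module.End.mul_eq_comp, Finset.sum_mul, Finset.mul_sum]
    exact Finset.sum_congr rfl fun i _ => by
      rw [smul_mul_assoc, mul_smul_comm, Module.End.mul_eq_comp, Module.End.mul_eq_comp, h1]
  -- conclusion from single normalized vector commuting
  have hfromv0 : ∀ (z : V), B z z ≠ 0 →
      ((if 0 < B z z then (1:ℝ) else -1) • J ((Real.sqrt |B z z|)⁻¹ • z)) ∘ₗ ρ =
        ρ ∘ₗ ((if 0 < B z z then (1:ℝ) else -1) • J ((Real.sqrt |B z z|)⁻¹ • z)) →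
      (J z) ∘ₗ ρ = ρ ∘ₗ (J z) := by
    intro z hz hcz
    have hr : (Real.sqrt |B z z|)⁻¹ ≠ 0 :=
      inv_ne_zero (ne_of_gt (Real.sqrt_pos.mpr (abs_pos.mpr hz)))
    have hε0 : (if 0 < B z z then (1:ℝ) else -1) ≠ 0 := by
      by_cases h : 0 < B z z <;> simp [h]
    rw [st14_Js B R hBnd J hJ _ z, smul_smul] at hcz
    have hs : (if 0 < B z z then (1:ℝ) else -1) *
        ((Real.sqrt |B z z|)⁻¹ * (Real.sqrt |B z z|)⁻¹) ≠ 0 :=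
      mul_ne_zero hε0 (mul_ne_zero hr hr)
    rw [← Module.End.mul_eq_comp, ← Module.End.mul_eq_comp] at hcz ⊢
    rw [smul_mul_assoc, mul_smul_comm] at hcz
    exact smul_right_injective _ hs hcz
  -- the normalized vector data for a non-null z
  constructor
  · -- part A
    constructor
    · -- (1) → (2)
      intro h1 π k l v εv w εw hvπ hεv hvo hvspan hwperp hεw hwo hwspan
      have hη : ∀ i : Fin k ⊕ Fin l, Sum.elim εv εw i = 1 ∨ Sum.elim εv εw i = -1 := by
        rintro (i | i)
        · exact hεv i
        · exact hεw i
      have ho : ∀ i j, B (Sum.elim v w i) (Sum.elim v w j) =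
          if i = j then Sum.elim εv εw i else 0 := by
        rintro (i | i) (j | j)
        · simpa using hvo i j
        · simp only [Sum.elim_inl, Sum.elim_inr, reduceCtorEq, if_false]
          rw [hBsymm]
          exact hwperp j (v i) (hvπ i)
        · simp only [Sum.elim_inl, Sum.elim_inr, reduceCtorEq, if_false]
          exact hwperp i (v j) (hvπ j)
        · simpa using hwo i j
      have hspanu : ∀ x : V, x ∈ Submodule.span ℝ (Set.range (Sum.elim v w)) := by
        intro x
        have hvmem : ∀ i, v i ∈ Submodule.span ℝ (Set.range (Sum.elim v w)) :=
          fun i => Submodule.subset_span ⟨Sum.inl i, rfl⟩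
        have hwmem : Submodule.span ℝ (Set.range w) ≤
            Submodule.span ℝ (Set.range (Sum.elim v w)) := by
          apply Submodule.span_mono
          rintro _ ⟨i, rfl⟩
          exact ⟨Sum.inr i, rfl⟩
        have hpmem : (∑ i, (εv i * B x (v i)) • v i) ∈
            Submodule.span ℝ (Set.range (Sum.elim v w)) :=
          Submodule.sum_mem _ fun i _ => Submodule.smul_mem _ _ (hvmem i)
        have hgen : ∀ j, B (x - ∑ i, (εv i * B x (v i)) • v i) (v j) = 0 := by
          intro j
          rw [map_sub, LinearMap.sub_apply]
          have hps : B (∑ i, (εv i * B x (v i)) • v i) (v j)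
              = ∑ i, (εv i * B x (v i)) * B (v i) (v j) := by
            rw [map_sum]
            simp [LinearMap.sum_apply]
          rw [hps, Finset.sum_eq_single j]
          · rw [hvo j j, if_pos rfl]
            rcases hεv j with h | h <;> rw [h] <;> ring
          · intro i _ hij
            rw [hvo i j, if_neg hij, mul_zero]
          · intro h; exact absurd (Finset.mem_univ j) h
        have hxp : ∀ y ∈ π, B (x - ∑ i, (εv i * B x (v i)) • v i) y = 0 := by
          intro y hy
          have hker : π ≤ LinearMap.ker (B (x - ∑ i, (εv i * B x (v i)) • v i)) := by
            rw [← hvspan, Submodule.span_le]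
            rintro _ ⟨j, rfl⟩
            exact hgen j
          exact hker hy
        have hxpw := hwspan _ hxp
        have hxeq : x = (x - ∑ i, (εv i * B x (v i)) • v i)
            + ∑ i, (εv i * B x (v i)) • v i := by abel
        rw [hxeq]
        exact Submodule.add_mem _ (hwmem hxpw) hpmem
      have hsum : (∑ i, εv i • J (v i)) + (∑ i, εw i • J (w i)) = ρ := by
        have hall := st14_sumJ B R hBsymm hBnd e ε hε horth J hJ ρ hρ
          (Sum.elim v w) (Sum.elim εv εw) hη ho hspanu
        rw [Fintype.sum_sum_type] at hall
        simpa using hall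
      have hAρ : (∑ i, εv i • J (v i)) ∘ₗ ρ = ρ ∘ₗ (∑ i, εv i • J (v i)) :=
        hsumcomm h1 k v εv
      have hA' : (∑ i, εw i • J (w i)) = ρ - (∑ i, εv i • J (v i)) :=
        eq_sub_of_add_eq' hsum
      rw [hA']
      rw [← Module.End.mul_eq_comp, ← Module.End.mul_eq_comp] at hAρ ⊢
      rw [mul_sub, sub_mul, hAρ]
    · -- (2) → (1)
      intro h2
      apply hkey
      intro z hz
      obtain ⟨εv0, hεv0def⟩ : ∃ c : ℝ, c = if 0 < B z z then (1:ℝ) else -1 := ⟨_, rfl⟩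
      obtain ⟨v0, hv0def⟩ : ∃ u : V, u = (Real.sqrt |B z z|)⁻¹ • z := ⟨_, rfl⟩
      apply hfromv0 z hz
      rw [← hεv0def, ← hv0def]
      have hεv0 : εv0 = 1 ∨ εv0 = -1 := by
        rw [hεv0def]
        by_cases h : 0 < B z z <;> simp [h]
      have hv00 : B v0 v0 = εv0 := by
        rw [hv0def, hεv0def]
        simp only [map_smul, LinearMap.smul_apply, smul_eq_mul]
        exact st14_scale (B z z) hz
      obtain ⟨l, w, εw, hεw, hwo, hwv0, hwspan⟩ :=
        st14_perp B hBsymm hBnd v0 εv0 hεv0 hv00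
      have hv0π : v0 ∈ Submodule.span ℝ (Set.range (fun _ : Fin 1 => v0)) :=
        Submodule.subset_span ⟨0, rfl⟩
      have hπ : ∀ y ∈ Submodule.span ℝ (Set.range (fun _ : Fin 1 => v0)),
          ∃ a : ℝ, y = a • v0 := by
        intro y hy
        rw [Set.range_const, Submodule.mem_span_singleton] at hy
        obtain ⟨a, ha⟩ := hy
        exact ⟨a, ha.symm⟩
      have hvvo : ∀ i j : Fin 1, B ((fun _ : Fin 1 => v0) i) ((fun _ : Fin 1 => v0) j)
          = if i = j then (fun _ : Fin 1 => εv0) i else 0 := by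
        intro i j
        have hij : i = j := Subsingleton.elim i j
        rw [if_pos hij]
        exact hv00
      have hwperpπ : ∀ i, ∀ y ∈ Submodule.span ℝ (Set.range (fun _ : Fin 1 => v0)),
          B (w i) y = 0 := by
        intro i y hy
        obtain ⟨a, rfl⟩ := hπ y hy
        rw [map_smul, smul_eq_mul, hwv0, mul_zero]
      have hwspanπ : ∀ x : V,
          (∀ y ∈ Submodule.span ℝ (Set.range (fun _ : Fin 1 => v0)), B x y = 0) →
          x ∈ Submodule.span ℝ (Set.range w) :=
        fun x hx => hwspan x (hx v0 hv0π)
      have hc := h2 (Submodule.span ℝ (Set.range (fun _ : Fin 1 => v0))) 1 l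
        (fun _ => v0) (fun _ => εv0) w εw
        (fun _ => hv0π) (fun _ => hεv0) hvvo rfl hwperpπ hεw hwo hwspanπ
      rw [Fin.sum_univ_one] at hc
      -- combined family sums to ρ
      have hη : ∀ i : Fin 1 ⊕ Fin l,
          Sum.elim (fun _ : Fin 1 => εv0) εw i = 1 ∨
          Sum.elim (fun _ : Fin 1 => εv0) εw i = -1 := by
        rintro (i | i)
        · exact hεv0
        · exact hεw i
      have ho : ∀ i j, B (Sum.elim (fun _ : Fin 1 => v0) w i)
          (Sum.elim (fun _ : Fin 1 => v0) w j) =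
          if i = j then Sum.elim (fun _ : Fin 1 => εv0) εw i else 0 := by
        rintro (i | i) (j | j)
        · simpa using hvvo i j
        · simp only [Sum.elim_inl, Sum.elim_inr, reduceCtorEq, if_false]
          rw [hBsymm]
          exact hwv0 j
        · simp only [Sum.elim_inl, Sum.elim_inr, reduceCtorEq, if_false]
          exact hwv0 i
        · simpa using hwo i j
      have hspanu : ∀ x : V,
          x ∈ Submodule.span ℝ (Set.range (Sum.elim (fun _ : Fin 1 => v0) w)) := by
        intro x
        have hvmem : v0 ∈ Submodule.span ℝ (Set.range (Sum.elim (fun _ : Fin 1 => v0) w)) :=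
          Submodule.subset_span ⟨Sum.inl 0, rfl⟩
        have hwmem : Submodule.span ℝ (Set.range w) ≤
            Submodule.span ℝ (Set.range (Sum.elim (fun _ : Fin 1 => v0) w)) := by
          apply Submodule.span_mono
          rintro _ ⟨i, rfl⟩
          exact ⟨Sum.inr i, rfl⟩
        have hdec : B (x - (εv0 * B x v0) • v0) v0 = 0 := by
          rw [map_sub, LinearMap.sub_apply, map_smul, LinearMap.smul_apply,
            smul_eq_mul, hv00]
          rcases hεv0 with h | h <;> rw [h] <;> ring
        have hrest := hwspan _ hdec
        have hxeq : x = (x - (εv0 * B x v0) • v0) + (εv0 * B x v0) • v0 := by abel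
        rw [hxeq]
        exact Submodule.add_mem _ (hwmem hrest) (Submodule.smul_mem _ _ hvmem)
      have hsum : (εv0 • J v0) + (∑ i, εw i • J (w i)) = ρ := by
        have hall := st14_sumJ B R hBsymm hBnd e ε hε horth J hJ ρ hρ
          (Sum.elim (fun _ : Fin 1 => v0) w) (Sum.elim (fun _ : Fin 1 => εv0) εw)
          hη ho hspanu
        rw [Fintype.sum_sum_type] at hall
        simpa using hall
      have hA' : (∑ i, εw i • J (w i)) = ρ - (εv0 • J v0) := eq_sub_of_add_eq' hsum
      rw [hA'] at hc
      rw [← Module.End.mul_eq_comp, ← Module.End.mul_eq_comp, mul_sub, sub_mul] at hc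
      rw [← Module.End.mul_eq_comp, ← Module.End.mul_eq_comp]
      exact sub_left_inj.mp hc
  · -- part B
    constructor
    · intro h1 π k v εv _ _ _ _
      exact hsumcomm h1 k v εv
    · intro h3
      apply hkey
      intro z hz
      obtain ⟨εv0, hεv0def⟩ : ∃ c : ℝ, c = if 0 < B z z then (1:ℝ) else -1 := ⟨_, rfl⟩
      obtain ⟨v0, hv0def⟩ : ∃ u : V, u = (Real.sqrt |B z z|)⁻¹ • z := ⟨_, rfl⟩
      apply hfromv0 z hz
      rw [← hεv0def, ← hv0def]
      have hεv0 : εv0 = 1 ∨ εv0 = -1 := by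
        rw [hεv0def]
        by_cases h : 0 < B z z <;> simp [h]
      have hv00 : B v0 v0 = εv0 := by
        rw [hv0def, hεv0def]
        simp only [map_smul, LinearMap.smul_apply, smul_eq_mul]
        exact st14_scale (B z z) hz
      have hvvo : ∀ i j : Fin 1, B ((fun _ : Fin 1 => v0) i) ((fun _ : Fin 1 => v0) j)
          = if i = j then (fun _ : Fin 1 => εv0) i else 0 := by
        intro i j
        have hij : i = j := Subsingleton.elim i j
        rw [if_pos hij]
        exact hv00
      have hc := h3 (Submodule.span ℝ (Set.range (fun _ : Fin 1 => v0))) 1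
        (fun _ => v0) (fun _ => εv0)
        (fun _ => Submodule.subset_span ⟨0, rfl⟩) (fun _ => hεv0) hvvo rfl
      rw [Fin.sum_univ_one] at hc
      exact hc
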